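/- arXiv:math/0201227 — 2 statements merged into one kernel-verified Lean document; each statement's English description precedes it below -/
import Mathlib

section
/- Let j₀ ≥ 3 be an integer and a > 2, and let v(n) = a if n = j₀ and v(n) = 0 otherwise. Then the set of real eigenvalues λ of H with |λ| > 2 is a singleton {λ_a}, and this unique eigenvalue satisfies a < λ_a < a + 2/a. -/
noncomputable section

/-- ℓ²(ℤ⁺), modelled with 0-based indexing: coordinate `n : ℕ` is site `n+1`. -/
abbrev H2 : Type := lp (fun _ : ℕ => ℂ) 2

/-- The standard orthonormal basis vector δ_{n+1}. -/
noncomputable def e (n : ℕ) : H2 := lp.single 2 n 1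



lemma coord (w : H2) (j : ℕ) : (inner ℂ (e j) w : ℂ) = w j := by
  rw [e, lp.inner_single_left]; simp [RCLike.inner_apply]

lemma hasSum_coords (H : H2 →L[ℂ] H2) (u : H2) (j : ℕ) :
    HasSum (fun l => u l * (inner ℂ (e j) (H (e l)) : ℂ)) ((H u : ℕ → ℂ) j) := by
  have h1 : HasSum (fun l => lp.single 2 l (u l)) u := lp.hasSum_single (by norm_num) u
  have h2 : HasSum (fun l => H (lp.single 2 l (u l))) (H u) := H.hasSum h1
  have h3 := (innerSL ℂ (e j)).hasSum h2
  rw [← coord (H u) j]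
  convert h3 using 2 with l
  case e'_3 => rfl
  case e'_6 => rfl
  have : lp.single 2 l (u l) = (u l : ℂ) • e l := by
    rw [e, ← lp.single_smul]; norm_num
  rw [this]; simp [inner_smul_right]

variable (a : ℝ) (v : ℕ → ℝ) (H : H2 →L[ℂ] H2)
variable (hH : ∀ j l : ℕ, (inner ℂ (e j) (H (e l)) : ℂ) =
      if j = l then (v j : ℂ) else if j = l + 1 ∨ l = j + 1 then 1 else 0)

include hH in
lemma coord0 (u : H2) : (H u : ℕ → ℂ) 0 = u 1 + (v 0 : ℂ) * u 0 := by
  have h := hasSum_coords H u 0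
  have hfin : ∀ l ∉ ({0, 1} : Finset ℕ), u l * (inner ℂ (e 0) (H (e l)) : ℂ) = 0 := by
    intro l hl
    simp only [Finset.mem_insert, Finset.mem_singleton] at hl
    push_neg at hl
    rw [hH 0 l]
    have h1 : ¬ (0 = l) := fun h => hl.1 h.symm
    have h2 : ¬ (0 = l + 1 ∨ l = 0 + 1) := by
      push_neg
      exact ⟨by omega, by omega⟩
    rw [if_neg h1, if_neg h2, mul_zero]
  have h2 : HasSum (fun l => u l * (inner ℂ (e 0) (H (e l)) : ℂ))
      (∑ l ∈ ({0, 1} : Finset ℕ), u l * (inner ℂ (e 0) (H (e l)) : ℂ)) :=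
    hasSum_sum_of_ne_finset_zero hfin
  have := h.unique h2
  rw [this, Finset.sum_insert (by norm_num), Finset.sum_singleton, hH 0 0, hH 0 1]
  norm_num
  ring

include hH in
lemma coordS (u : H2) (k : ℕ) :
    (H u : ℕ → ℂ) (k+1) = u (k+2) + (v (k+1) : ℂ) * u (k+1) + u k := by
  have h := hasSum_coords H u (k+1)
  have hfin : ∀ l ∉ ({k, k+1, k+2} : Finset ℕ), u l * (inner ℂ (e (k+1)) (H (e l)) : ℂ) = 0 := by
    intro l hl
    simp only [Finset.mem_insert, Finset.mem_singleton] at hl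
    push_neg at hl
    rw [hH (k+1) l]
    rw [if_neg (by omega), if_neg (by push_neg; omega), mul_zero]
  have h2 : HasSum (fun l => u l * (inner ℂ (e (k+1)) (H (e l)) : ℂ))
      (∑ l ∈ ({k, k+1, k+2} : Finset ℕ), u l * (inner ℂ (e (k+1)) (H (e l)) : ℂ)) :=
    hasSum_sum_of_ne_finset_zero hfin
  have heq := h.unique h2
  rw [heq, Finset.sum_insert (by simp only [Finset.mem_insert, Finset.mem_singleton]; omega), Finset.sum_insert (by simp),
    Finset.sum_singleton, hH (k+1) k, hH (k+1) (k+1), hH (k+1) (k+2)]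
  rw [if_neg (by omega), if_pos (by left; omega), if_pos rfl, if_neg (by omega), if_pos (by right; omega)]
  ring


-- scalar part
lemma scalar_root (a : ℝ) (ha : 2 < a) (N : ℕ) (hN : 3 ≤ N) :
    ∃ r : ℝ, 0 < r ∧ r < 1/a ∧ a * r * (1 - r^(2*N)) = 1 - r^2 ∧
      (∀ r' : ℝ, 0 < r' → r' < 1 → a * r' * (1 - r'^(2*N)) = 1 - r'^2 → r' = r) := by
  have ha0 : 0 < a := by linarith
  set G : ℝ → ℝ := fun r => a * ∑ k ∈ Finset.range N, (r^2)^k - 1/r with hG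
  -- the factorization: for r ≠ 0, a*r*(1 - r^(2N)) = 1 - r^2 ↔ (1-r^2) is... we relate later
  have hfact : ∀ r : ℝ, 1 - r^(2*N) = (1 - r^2) * ∑ k ∈ Finset.range N, (r^2)^k := by
    intro r
    have := geom_sum_mul (r^2) N
    -- (∑ i in range N, (r^2)^i) * (r^2 - 1) = (r^2)^N - 1
    have h2 : (r^2)^N = r^(2*N) := by rw [← pow_mul, mul_comm]
    nlinarith [this]
  -- strict monotonicity of G on Ioi 0
  have hmono : StrictMonoOn G (Set.Ioi (0:ℝ)) := by
    intro x hx y hy hxy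
    simp only [Set.mem_Ioi] at hx hy
    have h1 : ∑ k ∈ Finset.range N, (x^2)^k ≤ ∑ k ∈ Finset.range N, (y^2)^k := by
      apply Finset.sum_le_sum
      intro k _
      apply pow_le_pow_left₀ (by positivity)
      nlinarith
    have h2 : 1/y < 1/x := by
      apply one_div_lt_one_div_of_lt hx hxy
    simp only [hG]
    have := mul_le_mul_of_nonneg_left h1 (le_of_lt ha0)
    linarith
  have hNpos : (0:ℕ) < N := by omega
  -- G(1/a) > 0
  have hx2 : (0:ℝ) < 1/a := by positivity
  have hGa : 0 < G (1/a) := by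
    simp only [hG]
    have : (1:ℝ) + ((1/a)^2)^1 ≤ ∑ k ∈ Finset.range N, ((1/a)^2)^k := by
      have : ({0, 1} : Finset ℕ) ⊆ Finset.range N := by
        intro i hi; simp at hi; simp; omega
      calc (1:ℝ) + ((1/a)^2)^1 = ∑ k ∈ ({0,1} : Finset ℕ), ((1/a)^2)^k := by norm_num
        _ ≤ _ := Finset.sum_le_sum_of_subset_of_nonneg this (by intros; positivity)
    have h3 : a * (1 + ((1/a)^2)^1) ≤ a * ∑ k ∈ Finset.range N, ((1/a)^2)^k :=
      mul_le_mul_of_nonneg_left this (le_of_lt ha0)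
    have h4 : a * (1 + ((1/a)^2)^1) = a + 1/a := by field_simp
    have : 1/(1/a) = a := by field_simp
    rw [this]
    nlinarith
  -- G(r₀) < 0 for r₀ = 1/(a*N)
  set r₀ : ℝ := 1/(a*N) with hr₀
  have hr₀pos : 0 < r₀ := by positivity
  have hr₀lt : r₀ < 1/a := by
    rw [div_lt_div_iff₀ (by positivity) ha0]
    have : (3:ℝ) ≤ (N:ℝ) := by exact_mod_cast hN
    nlinarith
  have hGr₀ : G r₀ < 0 := by
    simp only [hG]
    have hsum : ∑ k ∈ Finset.range N, (r₀^2)^k < N := by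
      have : ∀ k ∈ Finset.range N, (r₀^2)^k ≤ 1 := by
        intro k _
        apply pow_le_one₀ (by positivity)
        have hr₀1 : r₀ < 1 := by
          have : (1:ℝ)/a < 1 := by rw [div_lt_one ha0]; linarith
          linarith
        nlinarith
      have hr₀1 : r₀ < 1 := by
        have : (1:ℝ)/a < 1 := by rw [div_lt_one ha0]; linarith
        linarith
      calc ∑ k ∈ Finset.range N, (r₀^2)^k < ∑ k ∈ Finset.range N, (1:ℝ) := by
            apply Finset.sum_lt_sum
            · intro k _
              apply pow_le_one₀ (by positivity)
              nlinarith
            · refine ⟨1, by simp; omega, ?_⟩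
              have : (r₀^2)^1 < 1 := by nlinarith
              simpa using this
        _ = N := by simp
    have h1 : 1/r₀ = a * N := by rw [hr₀]; field_simp
    have h2 : a * ∑ k ∈ Finset.range N, (r₀^2)^k < a * N :=
      (mul_lt_mul_iff_right₀ ha0).2 hsum
    linarith
  -- continuity of G on [r₀, 1/a]
  have hcont : ContinuousOn G (Set.Icc r₀ (1/a)) := by
    apply ContinuousOn.sub
    · exact (continuous_const.mul (continuous_finset_sum _ (fun k _ =>
        (continuous_pow 2).pow k))).continuousOn
    · apply ContinuousOn.div continuousOn_const continuousOn_id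
      intro x hx
      have h1 := hx.1
      intro h
      simp only [id] at h
      rw [h] at h1; linarith
  have hsub : Set.Ioo (G r₀) (G (1/a)) ⊆ G '' Set.Ioo r₀ (1/a) :=
    intermediate_value_Ioo (le_of_lt hr₀lt) hcont
  obtain ⟨r, hrmem, hGr⟩ := hsub ⟨hGr₀, hGa⟩
  have hrpos : 0 < r := lt_trans hr₀pos hrmem.1
  have hrlt : r < 1/a := hrmem.2
  have hr1 : r < 1 := by
    have : (1:ℝ)/a < 1 := by rw [div_lt_one ha0]; linarith
    linarith
  -- from G r = 0 derive key relation
  have keyOf : ∀ r' : ℝ, 0 < r' → G r' = 0 → a * r' * (1 - r'^(2*N)) = 1 - r'^2 := by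
    intro r' hr' hGr'
    have h1 : a * ∑ k ∈ Finset.range N, (r'^2)^k = 1/r' := by
      simp only [hG] at hGr'; linarith
    rw [hfact]
    have : r' * (1/r') = 1 := by field_simp
    calc a * r' * ((1 - r'^2) * ∑ k ∈ Finset.range N, (r'^2)^k)
        = r' * (a * ∑ k ∈ Finset.range N, (r'^2)^k) * (1 - r'^2) := by ring
      _ = r' * (1/r') * (1 - r'^2) := by rw [h1]
      _ = 1 - r'^2 := by rw [this]; ring
  have keyTo : ∀ r' : ℝ, 0 < r' → r' < 1 → a * r' * (1 - r'^(2*N)) = 1 - r'^2 → G r' = 0 := by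
    intro r' hr' hr'1 hk
    rw [hfact] at hk
    have hne : (1 : ℝ) - r'^2 ≠ 0 := by nlinarith
    have h2 : a * r' * ∑ k ∈ Finset.range N, (r'^2)^k = 1 := by
      have : (a * r' * ∑ k ∈ Finset.range N, (r'^2)^k - 1) * (1 - r'^2) = 0 := by
        nlinarith [hk]
      rcases mul_eq_zero.1 this with h | h
      · linarith
      · exact absurd h hne
    simp only [hG]
    have : a * ∑ k ∈ Finset.range N, (r'^2)^k = 1 / r' := by
      rw [eq_div_iff (ne_of_gt hr')]
      nlinarith [h2]
    rw [this]; ring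
  refine ⟨r, hrpos, hrlt, keyOf r hrpos hGr, ?_⟩
  intro r' h1 h2 h3
  exact hmono.injOn (Set.mem_Ioi.2 h1) (Set.mem_Ioi.2 hrpos)
    (by rw [keyTo r' h1 h2 h3, hGr])


lemma exists_eigen (a : ℝ) (N : ℕ) (hN : 3 ≤ N) (r : ℝ) (hr0 : 0 < r) (hr1 : r < 1)
    (hkey : a * r * (1 - r^(2*N)) = 1 - r^2) :
    ∃ f : ℕ → ℂ, Memℓp f 2 ∧ f 0 ≠ 0 ∧
      (f 1 + (if 0+1 = N then (a:ℂ) else 0) * f 0 = ((r + 1/r : ℝ) : ℂ) * f 0) ∧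
      (∀ k : ℕ, f (k+2) + (if k+1+1 = N then (a:ℂ) else 0) * f (k+1) + f k
        = ((r + 1/r : ℝ) : ℂ) * f (k+1)) := by
  set ρ : ℂ := (r : ℂ) with hρdef
  have hρ : ρ ≠ 0 := by
    simp only [hρdef, ne_eq, Complex.ofReal_eq_zero]; linarith
  have hρpow : ∀ m : ℕ, ρ ^ m ≠ 0 := fun m => pow_ne_zero m hρ
  set A : ℂ := 1 - (ρ^(2*N))⁻¹ with hA
  set lamC : ℂ := ρ + ρ⁻¹ with hlamC
  have hlam_eq : ((r + 1/r : ℝ) : ℂ) = lamC := by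
    push_cast
    rw [hlamC, hρdef, one_div]
  set f : ℕ → ℂ := fun n => if n < N then ρ^(n+1) - (ρ^(n+1))⁻¹ else A * ρ^(n+1) with hf
  -- key complexified
  have hkeyC : (a:ℂ) * ρ * (1 - ρ^(2*N)) = 1 - ρ^2 := by
    rw [hρdef]
    exact_mod_cast congrArg (Complex.ofReal) hkey
  have hrNe1 : ρ^(2*N) ≠ 1 := by
    rw [hρdef, ← Complex.ofReal_pow]
    intro h
    have : r^(2*N) = 1 := by exact_mod_cast h
    have : r^(2*N) < 1 := by
      apply pow_lt_one₀ (le_of_lt hr0) hr1; omega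
    linarith
  -- boundary consistency: f (N-1) = A * ρ^N, i.e. ρ^N - (ρ^N)⁻¹ = A * ρ^N
  have hbd : ∀ m : ℕ, m + 1 = N → f m = A * ρ^(m+1) := by
    intro m hm
    have : f m = ρ^(m+1) - (ρ^(m+1))⁻¹ := by
      rw [hf]; simp only [if_pos (by omega : m < N)]
    rw [this, hm, hA]
    have h2 : ρ^(2*N) = ρ^N * ρ^N := by rw [two_mul, pow_add]
    field_simp [h2]
    ring
  have htail : ∀ m : ℕ, N ≤ m + 1 → f m = A * ρ^(m+1) := by
    intro m hm
    rcases eq_or_lt_of_le hm with h | h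
    · exact hbd m h.symm
    · rw [hf]; simp only [if_neg (by omega : ¬ m < N)]
  refine ⟨f, ?_, ?_, ?_, ?_⟩
  · -- Memℓp
    apply memℓp_gen
    have h2 : (2 : ENNReal).toReal = 2 := by norm_num
    rw [h2]
    rw [← summable_nat_add_iff N]
    have heq : ∀ n : ℕ, ‖f (n + N)‖ ^ (2:ℝ) = (‖A‖^2 * (r^2)^(N+1)) * ((r^2)^n) := by
      intro n
      have hfeq : f (n + N) = A * ρ^(n + N + 1) := htail _ (by omega)
      have hnorm : ‖f (n + N)‖ = ‖A‖ * r ^ (n + N + 1) := by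
        rw [hfeq, norm_mul, norm_pow]
        rw [hρdef, Complex.norm_real, Real.norm_eq_abs, abs_of_pos hr0]
      rw [hnorm, show (2:ℝ) = ((2:ℕ):ℝ) by norm_num, Real.rpow_natCast]
      rw [mul_pow, ← pow_mul, mul_comm (n+N+1) 2, pow_mul,
        show n+N+1 = (N+1)+n by omega, pow_add]
      ring
    apply Summable.congr _ (fun n => (heq n).symm)
    apply Summable.mul_left
    apply summable_geometric_of_lt_one (by positivity)
    nlinarith
  · -- f 0 ≠ 0
    have : f 0 = ρ - ρ⁻¹ := by rw [hf]; simp [if_pos (by omega : 0 < N)]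
    rw [this]
    intro h
    have h3 := congrArg (· * ρ) h
    simp only [sub_mul, zero_mul] at h3
    rw [inv_mul_cancel₀ hρ] at h3
    have h4 : ρ^2 = 1 := by linear_combination h3
    have h5 : r^2 = 1 := by
      rw [hρdef] at h4; exact_mod_cast h4
    nlinarith
  · -- base equation
    rw [if_neg (by omega), hlam_eq]
    have h0 : f 0 = ρ - ρ⁻¹ := by rw [hf]; simp [if_pos (by omega : 0 < N)]
    have h1 : f 1 = ρ^2 - (ρ^2)⁻¹ := by rw [hf]; simp [if_pos (by omega : 1 < N)]
    rw [h0, h1, hlamC]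
    field_simp
    ring
  · -- step equations
    intro k
    rw [hlam_eq]
    rcases lt_trichotomy (k+2) N with hc | hc | hc
    · -- all in first branch
      have e0 : f k = ρ^(k+1) - (ρ^(k+1))⁻¹ := by rw [hf]; simp [if_pos (by omega : k < N)]
      have e1 : f (k+1) = ρ^(k+2) - (ρ^(k+2))⁻¹ := by rw [hf]; simp [if_pos (by omega : k+1 < N)]
      have e2 : f (k+2) = ρ^(k+3) - (ρ^(k+3))⁻¹ := by rw [hf]; simp [if_pos (by omega : k+2 < N)]
      rw [if_neg (by omega), e0, e1, e2, hlamC]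
      have p2 : ρ^(k+2) = ρ^(k+1) * ρ := by rw [pow_succ]
      have p3 : ρ^(k+3) = ρ^(k+1) * ρ^2 := by rw [show k+3 = (k+1)+2 by omega, pow_add]
      rw [p2, p3]
      have hR := hρpow (k+1)
      field_simp
      ring
    · -- pivot: k+2 = N
      have e0 : f k = ρ^(k+1) - (ρ^(k+1))⁻¹ := by rw [hf]; simp [if_pos (by omega : k < N)]
      have e1 : f (k+1) = ρ^(k+2) - (ρ^(k+2))⁻¹ := by rw [hf]; simp [if_pos (by omega : k+1 < N)]
      have e2 : f (k+2) = A * ρ^(k+3) := htail _ (by omega)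
      rw [if_pos (by omega), e0, e1, e2, hlamC, hA]
      have p2 : ρ^(k+2) = ρ^(k+1) * ρ := by rw [pow_succ]
      have p3 : ρ^(k+3) = ρ^(k+1) * ρ^2 := by rw [show k+3 = (k+1)+2 by omega, pow_add]
      have p4 : ρ^(2*N) = (ρ^(k+1))^2 * ρ^2 := by
        rw [← hc]; rw [show 2*(k+2) = (k+1)+((k+1)+2) by ring, pow_add, pow_add, sq, sq]; ring
      -- express a from hkeyC
      have hden : (1 : ℂ) - ρ^(2*N) ≠ 0 := by
        intro h; apply hrNe1; linear_combination -h
      have ha_eq : (a:ℂ) = (1 - ρ^2) / (ρ * (1 - ρ^(2*N))) := by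
        rw [eq_div_iff (by exact mul_ne_zero hρ hden)]
        linear_combination hkeyC
      rw [ha_eq, p2, p3, p4]
      have hR := hρpow (k+1)
      have hden2 : (1 : ℂ) - (ρ^(k+1))^2 * ρ^2 ≠ 0 := by rw [← p4]; exact hden
      generalize hg : ρ^(k+1) = R at hR hden2 ⊢
      field_simp
      ring
    · -- tail: k+2 > N
      have e0 : f k = A * ρ^(k+1) := htail _ (by omega)
      have e1 : f (k+1) = A * ρ^(k+2) := htail _ (by omega)
      have e2 : f (k+2) = A * ρ^(k+3) := htail _ (by omega)
      rw [if_neg (by omega), e0, e1, e2, hlamC]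
      have p2 : ρ^(k+2) = ρ^(k+1) * ρ := by rw [pow_succ]
      have p3 : ρ^(k+3) = ρ^(k+1) * ρ^2 := by rw [show k+3 = (k+1)+2 by omega, pow_add]
      rw [p2, p3]
      field_simp
      ring


lemma two_step {P : ℕ → Prop} (h0 : P 0) (h1 : P 1)
    (hstep : ∀ n, P n → P (n+1) → P (n+2)) : ∀ n, P n := by
  have key : ∀ n, P n ∧ P (n+1) := by
    intro n
    induction n with
    | zero => exact ⟨h0, h1⟩
    | succ k ih => exact ⟨ih.2, hstep k ih.1 ih.2⟩
  exact fun n => (key n).1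

set_option maxHeartbeats 1000000 in
lemma eigen_key (a : ℝ) (K : ℕ) (x r : ℝ) (hr0 : r ≠ 0) (hr1 : |r| < 1)
    (hx : r + 1/r = x)
    (f : ℕ → ℂ) (hmem : Memℓp f 2) (hne : ∃ n, f n ≠ 0)
    (h0 : f 1 + (if 0+1 = K+3 then (a:ℂ) else 0) * f 0 = (x:ℂ) * f 0)
    (hrec : ∀ k, f (k+2) + (if k+1+1 = K+3 then (a:ℂ) else 0) * f (k+1) + f k
      = (x:ℂ) * f (k+1)) :
    a * r * (1 - r^(2*(K+3))) = 1 - r^2 := by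
  obtain ⟨ρ, hρdef⟩ : ∃ y : ℂ, (r:ℂ) = y := ⟨_, rfl⟩
  have hρ : ρ ≠ 0 := by
    rw [← hρdef]; simpa using hr0
  have hρpow : ∀ m : ℕ, ρ ^ m ≠ 0 := fun m => pow_ne_zero m hρ
  have hxC : (x:ℂ) = ρ + ρ⁻¹ := by
    rw [← hρdef, ← hx]; push_cast; rw [one_div]
  have hr2 : r^2 ≠ 1 := by
    intro h; nlinarith [abs_nonneg r, sq_abs r]
  have hq : ρ * ρ - 1 ≠ 0 := by
    rw [← hρdef]
    intro h
    apply hr2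
    have : ((r*r - 1 : ℝ) : ℂ) = 0 := by push_cast; linear_combination h
    have h2 : r*r - 1 = 0 := by exact_mod_cast this
    nlinarith
  have hg0 : ρ - ρ⁻¹ ≠ 0 := by
    intro h
    apply hq
    have := congrArg (· * ρ) h
    simp only [sub_mul, zero_mul] at this
    rw [inv_mul_cancel₀ hρ] at this
    linear_combination this
  obtain ⟨C, hCdef⟩ : ∃ c : ℂ, f 0 / (ρ - ρ⁻¹) = c := ⟨_, rfl⟩
  -- Claim 1 : f n = C * (ρ^(n+1) - (ρ^(n+1))⁻¹) for n < K+3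
  have claim1 : ∀ n, n < K+3 → f n = C * (ρ^(n+1) - (ρ^(n+1))⁻¹) := by
    apply two_step (P := fun n => n < K+3 → f n = C * (ρ^(n+1) - (ρ^(n+1))⁻¹))
    · intro _
      rw [← hCdef, zero_add, pow_one, div_mul_cancel₀ _ hg0]
    · intro _
      have hV : (if 0+1 = K+3 then (a:ℂ) else 0) = 0 := if_neg (by omega)
      rw [hV, zero_mul, add_zero] at h0
      rw [h0, hxC, ← hCdef]
      rw [div_mul_eq_mul_div, eq_div_iff hg0]
      ring
    · intro n ih1 ih2 hlt
      have hV : (if n+1+1 = K+3 then (a:ℂ) else 0) = 0 := if_neg (by omega)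
      have h := hrec n
      rw [hV, zero_mul, add_zero] at h
      have e1 := ih1 (by omega)
      have e2 := ih2 (by omega)
      have hfn2 : f (n+2) = (x:ℂ) * f (n+1) - f n := by linear_combination h
      rw [hfn2, e1, e2, hxC]
      have p1 : ρ^(n+1+1) = ρ^(n+1) * ρ := by rw [pow_succ]
      have p2 : ρ^(n+2+1) = ρ^(n+1) * ρ^2 := by rw [show n+2+1 = (n+1)+2 by omega, pow_add]
      rw [p1, p2]
      have hR := hρpow (n+1)
      field_simp
      ring
  -- tail setup : for m, f (K+2+m) * ρ^m = a2 * (ρ^m)^2 + b2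
  have hq2 : ρ^2 - 1 ≠ 0 := by
    intro h; apply hq; rw [← h]; ring
  obtain ⟨R, hRdef⟩ : ∃ y : ℂ, ρ^(K+3) = y := ⟨_, rfl⟩
  have hR : R ≠ 0 := by rw [← hRdef]; exact hρpow _
  have hxρ : (x:ℂ) * ρ = ρ^2 + 1 := by
    rw [hxC]; field_simp
  obtain ⟨a2, ha2⟩ : ∃ y : ℂ, (f (K+3) * ρ - f (K+2))/(ρ^2 - 1) = y := ⟨_, rfl⟩
  obtain ⟨b2, hb2⟩ : ∃ y : ℂ, (f (K+2) * ρ^2 - f (K+3) * ρ)/(ρ^2 - 1) = y := ⟨_, rfl⟩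
  have tail : ∀ m, f (K+2+m) * ρ^m = a2 * (ρ^m)^2 + b2 := by
    apply two_step (P := fun m => f (K+2+m) * ρ^m = a2 * (ρ^m)^2 + b2)
    · rw [← ha2, ← hb2, pow_zero]
      field_simp
      ring
    · rw [show K+2+1 = K+3 by omega, ← ha2, ← hb2, pow_one]
      field_simp
      ring
    · intro m ih1 ih2
      have h := hrec (K+2+m)
      have hV : (if K+2+m+1+1 = K+3 then (a:ℂ) else 0) = 0 := if_neg (by omega)
      rw [hV, zero_mul, add_zero] at h
      have hfn2 : f (K+2+m+2) = (x:ℂ) * f (K+2+m+1) - f (K+2+m) := by linear_combination h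
      have hidx1 : K+2+(m+1) = K+2+m+1 := by omega
      have hidx2 : K+2+(m+2) = K+2+m+2 := by omega
      rw [hidx1] at ih2
      rw [hidx2, hfn2]
      have p1 : ρ^(m+1) = ρ^m * ρ := by rw [pow_succ]
      have p2 : ρ^(m+2) = ρ^m * ρ^2 := by rw [pow_add]
      rw [p1] at ih2
      rw [p2]
      linear_combination (f (K+2+m+1) * ρ^m * ρ) * hxρ + (ρ^2+1) * ih2 - ρ^2 * ih1
  -- decay : f tends to 0
  have hdecay : Filter.Tendsto f Filter.atTop (nhds 0) := by
    rw [tendsto_zero_iff_norm_tendsto_zero]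
    have hsum : Summable (fun n => ‖f n‖ ^ (2:ℝ)) := by
      have h := hmem.summable (p := 2) (by norm_num)
      simpa using h
    have h1 : Filter.Tendsto (fun n => ‖f n‖ ^ (2:ℝ)) Filter.atTop (nhds 0) :=
      hsum.tendsto_atTop_zero
    have h2 : Filter.Tendsto (fun n => Real.sqrt (‖f n‖ ^ (2:ℝ))) Filter.atTop (nhds 0) := by
      have h3 := (Real.continuous_sqrt.tendsto 0).comp h1
      simpa [Function.comp_def] using h3
    apply h2.congr
    intro n
    rw [show (2:ℝ) = ((2:ℕ):ℝ) by norm_num, Real.rpow_natCast]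
    rw [Real.sqrt_sq (norm_nonneg _)]
  have hρnorm : ‖ρ‖ < 1 := by
    rw [← hρdef, Complex.norm_real, Real.norm_eq_abs]; exact hr1
  -- b2 = 0
  have hb2z : b2 = 0 := by
    have hconst : ∀ m : ℕ, b2 = f (K+2+m) * ρ^m - a2 * (ρ^m)^2 := by
      intro m
      rw [tail m]; ring
    have hgeo : Filter.Tendsto (fun m : ℕ => ρ^m) Filter.atTop (nhds 0) :=
      tendsto_pow_atTop_nhds_zero_of_norm_lt_one hρnorm
    have hf2 : Filter.Tendsto (fun m : ℕ => f (K+2+m)) Filter.atTop (nhds 0) := by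
      have h5 := hdecay.comp (Filter.tendsto_add_atTop_nat (K+2))
      have h6 : ∀ m : ℕ, f (m + (K+2)) = f (K+2+m) := by intro m; congr 1; omega
      apply Filter.Tendsto.congr _ h5
      intro m
      simp only [Function.comp_apply]
      exact h6 m
    have htend : Filter.Tendsto (fun m : ℕ => f (K+2+m) * ρ^m - a2 * (ρ^m)^2)
        Filter.atTop (nhds 0) := by
      have := (hf2.mul hgeo).sub ((hgeo.mul hgeo).const_mul a2)
      simpa [pow_two] using this
    have hc : Filter.Tendsto (fun _ : ℕ => b2) Filter.atTop (nhds 0) :=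
      htend.congr (fun m => (hconst m).symm)
    exact tendsto_nhds_unique tendsto_const_nhds hc
  -- f 0 ≠ 0
  have hf0 : f 0 ≠ 0 := by
    intro h00
    have hCz : C = 0 := by rw [← hCdef, h00, zero_div]
    have hlow : ∀ n, n < K+3 → f n = 0 := by
      intro n hn; rw [claim1 n hn, hCz, zero_mul]
    have ha2z : a2 = 0 := by
      have ht := tail 0
      simp only [hb2z, add_zero, pow_zero, one_pow, mul_one] at ht
      rw [hlow _ (by omega)] at ht
      rw [← ht]
    obtain ⟨n, hn⟩ := hne
    apply hn
    rcases lt_or_ge n (K+3) with h | h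
    · exact hlow n h
    · obtain ⟨m, rfl⟩ : ∃ m, n = K+2+m := ⟨n - (K+2), by omega⟩
      have ht := tail m
      rw [hb2z, add_zero, ha2z, zero_mul] at ht
      exact (mul_eq_zero.1 ht).resolve_right (hρpow m)
  have hCne : C ≠ 0 := by
    rw [← hCdef]; exact div_ne_zero hf0 hg0
  -- the two matching equations
  have E1 : a2 = C * (R - R⁻¹) := by
    have ht := tail 0
    simp only [hb2z, add_zero, pow_zero, one_pow, mul_one] at ht
    rw [← ht, claim1 (K+2) (by omega), show K+2+1 = K+3 by omega, hRdef]
  have hfK3 : f (K+3) = a2 * ρ := by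
    have ht := tail 1
    simp only [hb2z, add_zero, pow_one, show K+2+1 = K+3 from rfl] at ht
    have := mul_right_cancel₀ hρ (by rw [ht]; ring : f (K+3) * ρ = (a2 * ρ) * ρ)
    exact this
  have hpow2 : ρ^(K+1+1) * ρ = R := by
    rw [← pow_succ, ← hRdef]
  have E2 : a2 * ρ + (a:ℂ) * (C * (R - R⁻¹)) + C * (R * ρ⁻¹ - R⁻¹ * ρ)
      = (ρ + ρ⁻¹) * (C * (R - R⁻¹)) := by
    have h := hrec (K+1)
    rw [if_pos (by omega)] at h
    have hf3 : f (K+1+2) = a2 * ρ := by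
      rw [show K+1+2 = K+3 by omega]; exact hfK3
    have hf2 : f (K+1+1) = C * (R - R⁻¹) := by
      rw [claim1 (K+1+1) (by omega), show K+1+1+1 = K+3 by omega, hRdef]
    have hf1 : f (K+1) = C * (R * ρ⁻¹ - R⁻¹ * ρ) := by
      rw [claim1 (K+1) (by omega)]
      congr 1
      have h1 : ρ^(K+1+1) = R * ρ⁻¹ := by
        rw [← hpow2]; field_simp
      rw [h1, mul_inv, inv_inv]
    rw [hf3, hf2, hf1, hxC] at h
    linear_combination h
  -- derive the key identity
  have hbr : C * ((ρ * (R - R⁻¹) + (a:ℂ) * (R - R⁻¹) + (R * ρ⁻¹ - R⁻¹ * ρ))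
      - (ρ + ρ⁻¹) * (R - R⁻¹)) = 0 := by
    linear_combination E2 - ρ * E1
  have hbr2 : (ρ * (R - R⁻¹) + (a:ℂ) * (R - R⁻¹) + (R * ρ⁻¹ - R⁻¹ * ρ))
      - (ρ + ρ⁻¹) * (R - R⁻¹) = 0 := by
    rcases mul_eq_zero.1 hbr with h | h
    · exact absurd h hCne
    · exact h
  have hfinal : (a:ℂ) * ρ * (1 - R^2) = 1 - ρ^2 := by
    field_simp at hbr2
    have h7 : ((a:ℂ)*ρ*(1 - R^2) - (1 - ρ^2)) * (ρ*R^2) = 0 := by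
      linear_combination (-ρ*R^2) * hbr2
    rcases mul_eq_zero.1 h7 with h | h
    · linear_combination h
    · exact absurd h (mul_ne_zero hρ (pow_ne_zero 2 hR))
  have hcast : ((a * r * (1 - r^(2*(K+3))) : ℝ) : ℂ) = ((1 - r^2 : ℝ) : ℂ) := by
    push_cast
    rw [show 2*(K+3) = (K+3)*2 by ring, pow_mul]
    rw [hρdef, hRdef]
    linear_combination hfinal
  exact_mod_cast hcast


lemma exists_r_pos (x : ℝ) (hx : 2 < x) : ∃ r : ℝ, 0 < r ∧ r < 1 ∧ r + 1/r = x := by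
  have hx0 : 0 < x := by linarith
  set d := Real.sqrt (x^2 - 4) with hd
  have hd0 : 0 ≤ d := Real.sqrt_nonneg _
  have hd2 : d^2 = x^2 - 4 := Real.sq_sqrt (by nlinarith)
  refine ⟨(x - d)/2, ?_, ?_, ?_⟩
  · have : d < x := by nlinarith
    linarith
  · have h1 : x - 2 < d := by nlinarith
    linarith
  · have hr0 : (x - d)/2 ≠ 0 := by
      have : d < x := by nlinarith
      intro h
      have : x = d := by linarith [(div_eq_zero_iff.1 h).resolve_right (by norm_num)]
      linarith
    have hq : ((x-d)/2)^2 - x*((x-d)/2) + 1 = 0 := by linear_combination (1/4) * hd2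
    have h7 : 1/((x-d)/2) = x - (x-d)/2 := by
      rw [eq_comm, eq_div_iff hr0]
      linear_combination -hq
    rw [h7]
    ring

lemma exists_r_gen (x : ℝ) (hx : 2 < |x|) : ∃ r : ℝ, r ≠ 0 ∧ |r| < 1 ∧ r + 1/r = x := by
  rcases le_or_gt 0 x with h | h
  · rw [abs_of_nonneg h] at hx
    obtain ⟨r, h1, h2, h3⟩ := exists_r_pos x hx
    exact ⟨r, ne_of_gt h1, by rw [abs_of_pos h1]; exact h2, h3⟩
  · rw [abs_of_neg h] at hx
    obtain ⟨r, h1, h2, h3⟩ := exists_r_pos (-x) hx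
    refine ⟨-r, by simp [ne_of_gt h1], by rw [abs_neg, abs_of_pos h1]; exact h2, ?_⟩
    rw [div_neg]
    linarith [h3]

/-- for the rank-one potential `v(j₀) = a > 2` (at a site `j₀ ≥ 3`), the set of
real eigenvalues `λ` of `H` with `|λ| > 2` is a singleton `{λ_a}`, and
`a < λ_a < a + 2/a`. -/
theorem stmt_6 (j₀ : ℕ) (hj₀ : 3 ≤ j₀) (a : ℝ) (ha : 2 < a)
    (v : ℕ → ℝ) (hv : ∀ n : ℕ, v n = if n + 1 = j₀ then a else 0)
    (H : H2 →L[ℂ] H2)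
    (hH : ∀ j l : ℕ, (inner ℂ (e j) (H (e l)) : ℂ) =
      if j = l then (v j : ℂ) else if j = l + 1 ∨ l = j + 1 then 1 else 0) :
    ∃ lam : ℝ, a < lam ∧ lam < a + 2 / a ∧
      {x : ℝ | 2 < |x| ∧ ∃ u : H2, u ≠ 0 ∧ H u = (x : ℂ) • u} = {lam} := by
  obtain ⟨K, rfl⟩ : ∃ K, j₀ = K+3 := ⟨j₀-3, by omega⟩
  obtain ⟨r, hr0, hrlt, hkey, huniq⟩ := scalar_root a ha (K+3) (by omega)
  have ha0 : 0 < a := by linarith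
  have hinv : 1/a < 1 := by rw [div_lt_one ha0]; linarith
  have hr1 : r < 1 := lt_trans hrlt hinv
  have hrne : r ≠ 0 := ne_of_gt hr0
  set lam := r + 1/r with hlam
  have hlam_eq : lam = a + 2*r - a*r^(2*(K+3)) := by
    rw [hlam]
    field_simp
    linear_combination -hkey
  have hb1 : a < lam := by
    have e1 : r * a < 1 := (lt_div_iff₀ ha0).mp hrlt
    have e2 : r^(2*(K+3)) ≤ r^2 := pow_le_pow_of_le_one (le_of_lt hr0) (le_of_lt hr1) (by omega)
    have e3 : a * r^(2*(K+3)) < r := by nlinarith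
    rw [hlam_eq]
    linarith
  have hb2 : lam < a + 2/a := by
    have e1 : 0 < a * r^(2*(K+3)) := by positivity
    have e2 : 2*r < 2/a := by
      rw [lt_div_iff₀ ha0]
      nlinarith [(lt_div_iff₀ ha0).mp hrlt]
    rw [hlam_eq]
    linarith
  have hlam2 : 2 < lam := by linarith
  refine ⟨lam, hb1, hb2, ?_⟩
  ext x
  simp only [Set.mem_setOf_eq, Set.mem_singleton_iff]
  constructor
  · rintro ⟨hx2, u, hu0, hHu⟩
    have hcoords : ∀ n, (H u : ℕ → ℂ) n = (x:ℂ) * (u : ℕ → ℂ) n := by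
      intro n; rw [hHu, lp.coeFn_smul, Pi.smul_apply, smul_eq_mul]
    have hb : (u : ℕ → ℂ) 1 + (if 0+1 = K+3 then (a:ℂ) else 0) * (u : ℕ → ℂ) 0
        = (x:ℂ) * (u : ℕ → ℂ) 0 := by
      have h1 := coord0 v H hH u
      rw [hcoords 0] at h1
      have h2 : ((v 0 : ℝ) : ℂ) = (if 0+1 = K+3 then (a:ℂ) else 0) := by
        rw [hv 0]; split_ifs <;> norm_num
      rw [← h2]; linear_combination -h1
    have hrec' : ∀ k, (u : ℕ → ℂ) (k+2) + (if k+1+1 = K+3 then (a:ℂ) else 0) * (u : ℕ → ℂ) (k+1)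
        + (u : ℕ → ℂ) k = (x:ℂ) * (u : ℕ → ℂ) (k+1) := by
      intro k
      have h1 := coordS v H hH u k
      rw [hcoords (k+1)] at h1
      have h2 : ((v (k+1) : ℝ) : ℂ) = (if k+1+1 = K+3 then (a:ℂ) else 0) := by
        rw [hv (k+1)]; split_ifs <;> norm_num
      rw [← h2]; linear_combination -h1
    have hne : ∃ n, (u : ℕ → ℂ) n ≠ 0 := by
      by_contra hc
      push_neg at hc
      apply hu0
      apply lp.ext
      funext n
      simpa using hc n
    obtain ⟨r', h1', h2', h3'⟩ := exists_r_gen x hx2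
    have hkey' := eigen_key a K x r' h1' h2' h3' (u : ℕ → ℂ) (lp.memℓp u) hne hb hrec'
    have hr'sq : r'^2 < 1 := by nlinarith [abs_nonneg r', sq_abs r']
    have hpow : r'^(2*(K+3)) < 1 := by
      rw [pow_mul]
      exact pow_lt_one₀ (sq_nonneg r') hr'sq (by omega)
    have hr'pos : 0 < r' := by
      rcases lt_trichotomy r' 0 with h | h | h
      · have hfac : 0 < 1 - r'^(2*(K+3)) := by linarith
        have : a * r' * (1 - r'^(2*(K+3))) < 0 :=
          mul_neg_of_neg_of_pos (mul_neg_of_pos_of_neg ha0 h) hfac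
        nlinarith
      · exact absurd h h1'
      · exact h
    have hr'1 : r' < 1 := by rw [abs_of_pos hr'pos] at h2'; exact h2'
    have hreq := huniq r' hr'pos hr'1 hkey'
    rw [← h3', hreq]
  · rintro rfl
    refine ⟨by rwa [abs_of_pos (by linarith : (0:ℝ) < lam)], ?_⟩
    obtain ⟨f, hmem, hf0, hbase, hstep⟩ := exists_eigen a (K+3) (by omega) r hr0 hr1 hkey
    refine ⟨⟨f, hmem⟩, ?_, ?_⟩
    · intro h
      apply hf0
      have h2 := congrArg (fun w : H2 => (w : ℕ → ℂ) 0) h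
      simpa using h2
    · apply lp.ext
      funext n
      have hco : ((⟨f, hmem⟩ : H2) : ℕ → ℂ) = f := rfl
      have hsm : ∀ m, (((lam:ℂ) • (⟨f, hmem⟩ : H2) : H2) : ℕ → ℂ) m = (lam:ℂ) * f m := by
        intro m
        rw [lp.coeFn_smul, Pi.smul_apply, smul_eq_mul, hco]
      cases n with
      | zero =>
        rw [coord0 v H hH, hsm, hco]
        have h2 : ((v 0 : ℝ) : ℂ) = (if 0+1 = K+3 then (a:ℂ) else 0) := by
          rw [hv 0]; split_ifs <;> norm_num
        rw [h2]
        exact hbase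
      | succ k =>
        rw [coordS v H hH _ k, hsm, hco]
        have h2 : ((v (k+1) : ℝ) : ℂ) = (if k+1+1 = K+3 then (a:ℂ) else 0) := by
          rw [hv (k+1)]; split_ifs <;> norm_num
        rw [h2]
        linear_combination hstep k
end
end

section
/- Fix z ∈ ℂ and let T(β) be the bounded operator on ℓ²(ℤ⁺) with matrix entries ⟨T(β)δ_l, δ_j⟩ = β̂(j−l) (diagonal 2+z², first off-diagonals −2z, second off-diagonals 1, zero elsewhere). Then T(β) is invertible if and only if z ∉ [−2,2]. -/
noncomputable section

/-- Fourier coefficients of the symbol `β(e^{iθ};z) = (2cosθ − z)²`. -/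
def bhat (z : ℂ) (n : ℤ) : ℂ :=
  if n = 0 then 2 + z ^ 2 else if n.natAbs = 1 then -2 * z else if n.natAbs = 2 then 1 else 0

/-- The interval [−2,2] regarded as a subset of ℂ. -/
def I22 : Set ℂ := (fun x : ℝ => (x : ℂ)) '' Set.Icc (-2) 2



lemma memlp_iff {f : ℕ → ℂ} : Memℓp f 2 ↔ Summable (fun n => ‖f n‖ ^ (2:ℝ)) := by
  rw [memℓp_gen_iff (by norm_num)]
  norm_num

/-- right shift as a function -/
def shf (x : ℕ → ℂ) : ℕ → ℂ := fun n => if n = 0 then 0 else x (n - 1)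

lemma shf_succ (x : ℕ → ℂ) (n : ℕ) : shf x (n + 1) = x n := by simp [shf]

lemma shf_norm_tsum (x : ℕ → ℂ) : ∑' n, ‖shf x n‖ ^ (2:ℝ) = ∑' n, ‖x n‖ ^ (2:ℝ) := by
  refine tsum_eq_tsum_of_ne_zero_bij (fun n => (n : ℕ) + 1) ?_ ?_ ?_
  · intro a b hab
    have : (a : ℕ) + 1 = (b : ℕ) + 1 := hab
    exact Subtype.ext (by omega)
  · intro a ha
    rcases a with _ | m
    · simp [shf, Function.mem_support] at ha
    · exact ⟨⟨m, by simpa [shf_succ] using ha⟩, rfl⟩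
  · intro n; simp [shf]

lemma shf_memlp {x : H2} : Memℓp (shf x) 2 := by
  rw [memlp_iff, ← summable_nat_add_iff 1]
  simp only [shf_succ]
  exact memlp_iff.mp (lp.memℓp x)

lemma rpow_two_norm (a : ℝ) (h : 0 ≤ a) : a ^ ((2:ENNReal)).toReal = a ^ 2 := by
  have : ((2:ENNReal)).toReal = ((2:ℕ):ℝ) := by norm_num
  rw [this, Real.rpow_natCast]

lemma norm_eq_of_tsum_eq {x y : H2}
    (h : ∑' n, ‖(x : ℕ → ℂ) n‖ ^ ((2:ENNReal)).toReal = ∑' n, ‖(y : ℕ → ℂ) n‖ ^ ((2:ENNReal)).toReal) :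
    ‖x‖ = ‖y‖ := by
  have h1 := lp.norm_rpow_eq_tsum (p := 2) (by norm_num) x
  have h2 := lp.norm_rpow_eq_tsum (p := 2) (by norm_num) y
  have h3 : ‖x‖ ^ ((2:ENNReal)).toReal = ‖y‖ ^ ((2:ENNReal)).toReal := by rw [h1, h2]; exact h
  rw [rpow_two_norm _ (norm_nonneg x), rpow_two_norm _ (norm_nonneg y)] at h3
  nlinarith [norm_nonneg x, norm_nonneg y]

/-- The right shift `S` as a linear isometry. -/
def Sli : H2 →ₗᵢ[ℂ] H2 where
  toFun x := ⟨shf x, shf_memlp⟩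
  map_add' x y := by
    ext n
    rcases n with _ | m <;> simp [shf] <;> erw [Pi.add_apply] <;> simp [shf]
  map_smul' c x := by
    ext n
    rcases n with _ | m <;> simp [shf]
  norm_map' x := by
    apply norm_eq_of_tsum_eq
    have := shf_norm_tsum x
    norm_num
    convert this using 2 <;> norm_num

/-- The right shift as a continuous linear map. -/
def S : H2 →L[ℂ] H2 := Sli.toContinuousLinearMap

lemma S_apply (x : H2) (n : ℕ) : (S x : ℕ → ℂ) n = if n = 0 then 0 else (x : ℕ → ℂ) (n-1) := rfl

lemma S_norm_le : ‖S‖ ≤ 1 := Sli.norm_toContinuousLinearMap_le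

lemma shl_memlp {x : H2} : Memℓp (fun n => (x : ℕ → ℂ) (n+1)) 2 := by
  rw [memlp_iff]
  exact (summable_nat_add_iff 1).2 (memlp_iff.mp (lp.memℓp x))

/-- The left shift (adjoint of S) as a linear map. -/
def Rlm : H2 →ₗ[ℂ] H2 where
  toFun x := ⟨fun n => (x : ℕ → ℂ) (n+1), shl_memlp⟩
  map_add' x y := by ext n; simp; rfl
  map_smul' c x := by ext n; simp

lemma Rlm_norm_le (x : H2) : ‖Rlm x‖ ≤ 1 * ‖x‖ := by
  rw [one_mul]
  have h1 := lp.norm_rpow_eq_tsum (p := 2) (by norm_num) (Rlm x)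
  have h2 := lp.norm_rpow_eq_tsum (p := 2) (by norm_num) x
  have hs : Summable (fun n => ‖(x : ℕ → ℂ) n‖ ^ ((2:ENNReal)).toReal) := by
    have := memlp_iff.mp (lp.memℓp x); norm_num; convert this using 2 <;> norm_num
  have key : ∑' n, ‖(Rlm x : ℕ → ℂ) n‖ ^ ((2:ENNReal)).toReal
      ≤ ∑' n, ‖(x : ℕ → ℂ) n‖ ^ ((2:ENNReal)).toReal := by
    have hR : ∀ n, ‖(Rlm x : ℕ → ℂ) n‖ ^ ((2:ENNReal)).toReal
        = ‖(x : ℕ → ℂ) (n+1)‖ ^ ((2:ENNReal)).toReal := fun n => rfl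
    calc ∑' n, ‖(Rlm x : ℕ → ℂ) n‖ ^ ((2:ENNReal)).toReal
        = ∑' n, ‖(x : ℕ → ℂ) (n+1)‖ ^ ((2:ENNReal)).toReal := tsum_congr hR
      _ ≤ ∑' n, ‖(x : ℕ → ℂ) n‖ ^ ((2:ENNReal)).toReal := by
          rw [Summable.tsum_eq_zero_add hs]
          have hnn : 0 ≤ ‖(x : ℕ → ℂ) 0‖ ^ ((2:ENNReal)).toReal := by
            rw [rpow_two_norm _ (norm_nonneg _)]; positivity
          linarith
  have h3 : ‖Rlm x‖ ^ 2 ≤ ‖x‖ ^ 2 := by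
    rw [← rpow_two_norm _ (norm_nonneg _), ← rpow_two_norm _ (norm_nonneg _), h1, h2]
    exact key
  nlinarith [norm_nonneg (Rlm x), norm_nonneg x]

/-- The left shift as a continuous linear map. -/
def Sad : H2 →L[ℂ] H2 := Rlm.mkContinuous 1 Rlm_norm_le

lemma Sad_apply (x : H2) (n : ℕ) : (Sad x : ℕ → ℂ) n = (x : ℕ → ℂ) (n+1) := rfl

lemma Sad_norm_le : ‖Sad‖ ≤ 1 := Rlm.mkContinuous_norm_le zero_le_one Rlm_norm_le


lemma e_apply (l j : ℕ) : (e l : ℕ → ℂ) j = if j = l then 1 else 0 := by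
  rw [e, lp.single_apply]
  split_ifs with h <;> simp [h]

lemma inner_e_left (j : ℕ) (x : H2) : (inner ℂ (e j) x : ℂ) = (x : ℕ → ℂ) j := by
  rw [e, lp.inner_single_left]
  simp [RCLike.inner_apply]

/-- Two CLMs agreeing on all basis vectors are equal. -/
lemma ext_basis {A B : H2 →L[ℂ] H2} (h : ∀ l, A (e l) = B (e l)) : A = B := by
  ext x
  have hx : HasSum (fun n : ℕ => lp.single 2 n ((x : ℕ → ℂ) n)) x :=
    lp.hasSum_single (by norm_num) x
  have hA : HasSum (fun n : ℕ => A (lp.single 2 n ((x : ℕ → ℂ) n))) (A x) := hx.mapL A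
  have hB : HasSum (fun n : ℕ => B (lp.single 2 n ((x : ℕ → ℂ) n))) (B x) := hx.mapL B
  have heq : ∀ n : ℕ, A (lp.single 2 n ((x : ℕ → ℂ) n)) = B (lp.single 2 n ((x : ℕ → ℂ) n)) := by
    intro n
    have h1 : lp.single 2 n ((x : ℕ → ℂ) n) = ((x : ℕ → ℂ) n) • e n := by
      rw [e, ← lp.single_smul]
      norm_num
    rw [h1, map_smul, map_smul, h n]
  have : A x = B x := hA.unique (funext heq ▸ hB)
  rw [this]


def E' (a b : ℕ) : ℂ := if a = b then 1 else 0

lemma M_coords (μ : ℂ) (x : H2) (j : ℕ) :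
    (((1 - μ • S) x) : ℕ → ℂ) j = (x : ℕ → ℂ) j - μ * (if j = 0 then 0 else (x : ℕ → ℂ) (j-1)) := by
  rw [ContinuousLinearMap.sub_apply, ContinuousLinearMap.smul_apply, ContinuousLinearMap.one_apply,
    lp.coeFn_sub, Pi.sub_apply, lp.coeFn_smul, Pi.smul_apply, S_apply]
  simp

lemma N_coords (μ : ℂ) (x : H2) (j : ℕ) :
    (((1 - μ • Sad) x) : ℕ → ℂ) j = (x : ℕ → ℂ) j - μ * (x : ℕ → ℂ) (j+1) := by
  rw [ContinuousLinearMap.sub_apply, ContinuousLinearMap.smul_apply, ContinuousLinearMap.one_apply,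
    lp.coeFn_sub, Pi.sub_apply, lp.coeFn_smul, Pi.smul_apply, Sad_apply]
  simp

lemma B_e_coords (μ : ℂ) (l k : ℕ) :
    (((1 - μ • S) (e l)) : ℕ → ℂ) k = E' k l - μ * E' k (l+1) := by
  rw [M_coords, e_apply, E', E']
  rcases k with _ | m
  · simp
  · simp only [Nat.succ_ne_zero, if_false, Nat.add_sub_cancel, e_apply]
    by_cases h : m = l <;> simp [h]

lemma BB_e_coords (μ : ℂ) (l k : ℕ) :
    (((1 - μ • S) ((1 - μ • S) (e l))) : ℕ → ℂ) k
      = E' k l - 2 * μ * E' k (l+1) + μ^2 * E' k (l+2) := by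
  rw [M_coords, B_e_coords]
  rcases k with _ | m
  · simp [E']
  · simp only [Nat.succ_ne_zero, if_false, Nat.add_sub_cancel, B_e_coords, E']
    by_cases h1 : m = l
    · simp [h1]; ring
    · by_cases h2 : m = l + 1
      · simp [h2, h1, show l+1+1 = l+2 from rfl]
        ring
      · have c1 : ¬ (m + 1 = l + 1) := by omega
        by_cases h3 : m + 1 = l
        · simp [h3, h1, h2, c1, show ¬ (m+1 = l+2) by omega]
        · have h4 : ¬ (m + 1 = l + 2) := by omega
          simp [h1, h2, c1, h3, h4]

lemma NNBB_e_coords (μ : ℂ) (hμ : μ ≠ 0) (l j : ℕ) :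
    (((1 - μ • Sad) ((1 - μ • Sad) ((1 - μ • S) ((1 - μ • S) (e l))))) : ℕ → ℂ) j
      = μ^2 * bhat (μ + μ⁻¹) ((j : ℤ) - (l : ℤ)) := by
  rw [N_coords, N_coords, N_coords, BB_e_coords, BB_e_coords, BB_e_coords]
  set z := μ + μ⁻¹ with hz
  have hzmul : μ * z = μ^2 + 1 := by rw [hz, mul_add, mul_inv_cancel₀ hμ]; ring
  by_cases h0 : j = l
  · have : (j:ℤ) - l = 0 := by omega
    rw [this]
    simp only [bhat, if_pos rfl]
    simp [E', h0, show ¬ (l+1 = l) by omega, show ¬ (l+2 = l) by omega,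
      show ¬ (l = l+1) by omega, show ¬ (l = l+2) by omega, show ¬ (l+1 = l+2) by omega,
      show ¬ (l+2 = l+1) by omega]
    field_simp [hz]
    linear_combination -(μ*z + μ^2 + 1) * hzmul
  · by_cases h1 : j = l + 1
    · have : (j:ℤ) - l = 1 := by omega
      rw [this]
      simp only [bhat, show (1:ℤ) ≠ 0 by norm_num, if_false, Int.natAbs_one, if_pos rfl]
      simp [E', h1, show ¬ (l+1+1 = l) by omega, show ¬ (l+1+1+1 = l) by omega,
        show ¬ (l+1+1 = l+1) by omega, show ¬ (l+1+1+1 = l+1) by omega,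
        show ¬ (l+1+1+1 = l+2) by omega, show ¬ (l+1 = l) by omega]
      field_simp [hz]
      linear_combination 2 * hzmul
    · by_cases h2 : j + 1 = l
      · have : (j:ℤ) - l = -1 := by omega
        rw [this]
        simp only [bhat, show (-1:ℤ) ≠ 0 by norm_num, if_false]
        norm_num
        simp [E', show ¬ (j = l) from h0, h2, show ¬ (j = l+1) by omega, show ¬ (j = l+2) by omega,
          show ¬ (j+1 = l+1) by omega, show ¬ (j+2 = l) by omega, show j+2 = l+1 by omega,
          show ¬ (j+1 = l+2) by omega, show ¬ (j+2 = l+2) by omega]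
        field_simp [hz]
        linear_combination 2 * hzmul
      · by_cases h3 : j = l + 2
        · have : (j:ℤ) - l = 2 := by omega
          rw [this]
          simp only [bhat, show (2:ℤ) ≠ 0 by norm_num, if_false]
          norm_num
          simp [E', h3, show ¬ (l+2 = l) by omega, show ¬ (l+2 = l+1) by omega,
            show ¬ (l+2+1 = l) by omega, show ¬ (l+2+1 = l+1) by omega,
            show ¬ (l+2+1 = l+2) by omega, show ¬ (l+2+2 = l) by omega,
            show ¬ (l+2+2 = l+1) by omega, show ¬ (l+2+2 = l+2) by omega]
        · by_cases h4 : j + 2 = l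
          · have : (j:ℤ) - l = -2 := by omega
            rw [this]
            simp only [bhat, show (-2:ℤ) ≠ 0 by norm_num, if_false]
            norm_num
            simp [E', h0, h4, show ¬ (j = l+1) by omega, show ¬ (j = l+2) by omega,
              show ¬ (j+1 = l) by omega, show ¬ (j+1 = l+1) by omega, show ¬ (j+1 = l+2) by omega,
              show ¬ (j+2 = l+1) by omega, show ¬ (j+2 = l+2) by omega]
            ring
          · have hb : bhat z ((j:ℤ) - l) = 0 := by
              rw [bhat]
              have hn0 : (j:ℤ) - l ≠ 0 := by omega
              have hn1 : ((j:ℤ) - l).natAbs ≠ 1 := by omega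
              have hn2 : ((j:ℤ) - l).natAbs ≠ 2 := by omega
              simp [hn0, hn1, hn2]
            rw [hb]
            simp [E', h0, show ¬ (j = l+1) from h1, show ¬ (j = l+2) from h3,
              show ¬ (j+1 = l) from h2, show ¬ (j+1 = l+1) by omega, show ¬ (j+1 = l+2) by omega,
              show ¬ (j+2 = l) from h4, show ¬ (j+2 = l+1) by omega, show ¬ (j+2 = l+2) by omega]

lemma isUnit_oneSub_smul (μ : ℂ) (hμ : ‖μ‖ < 1) (W : H2 →L[ℂ] H2) (hW : ‖W‖ ≤ 1) :
    IsUnit (1 - μ • W) := by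
  have h : ‖μ • W‖ < 1 := by
    calc ‖μ • W‖ ≤ ‖μ‖ * ‖W‖ := norm_smul_le μ W
      _ ≤ ‖μ‖ * 1 := by apply mul_le_mul_of_nonneg_left hW (norm_nonneg μ)
      _ = ‖μ‖ := by simp
      _ < 1 := hμ
  exact (Units.oneSub (μ • W) h).isUnit

lemma isUnit_scalar (c : ℂ) (hc : c ≠ 0) : IsUnit (c • (1 : H2 →L[ℂ] H2)) := by
  refine ⟨⟨c • 1, c⁻¹ • 1, ?_, ?_⟩, rfl⟩
  · rw [smul_mul_smul_comm]; simp [mul_inv_cancel₀ hc]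
  · rw [smul_mul_smul_comm]; simp [inv_mul_cancel₀ hc]

lemma dir1 (z μ : ℂ) (hμ0 : μ ≠ 0) (hμ : ‖μ‖ < 1) (hz : z = μ + μ⁻¹)
    (T : H2 →L[ℂ] H2) (hTc : ∀ j l : ℕ, (T (e l) : ℕ → ℂ) j = bhat z ((j:ℤ) - (l:ℤ))) :
    IsUnit T := by
  set A := (1 - μ • Sad : H2 →L[ℂ] H2) with hA
  set B := (1 - μ • S : H2 →L[ℂ] H2) with hB
  have hkey : A * (A * (B * B)) = (μ^2 • 1 : H2 →L[ℂ] H2) * T := by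
    apply ext_basis
    intro l
    apply lp.ext
    funext j
    have lhs : ((A * (A * (B * B))) (e l) : ℕ → ℂ) j = μ^2 * bhat (μ + μ⁻¹) ((j:ℤ) - l) := by
      rw [ContinuousLinearMap.mul_apply, ContinuousLinearMap.mul_apply,
        ContinuousLinearMap.mul_apply]
      exact NNBB_e_coords μ hμ0 l j
    rw [lhs]
    rw [ContinuousLinearMap.mul_apply, ContinuousLinearMap.smul_apply,
      ContinuousLinearMap.one_apply, lp.coeFn_smul, Pi.smul_apply, hTc j l, hz]
    simp [smul_eq_mul]
  have hAu : IsUnit A := isUnit_oneSub_smul μ hμ Sad Sad_norm_le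
  have hBu : IsUnit B := isUnit_oneSub_smul μ hμ S S_norm_le
  have hprod : IsUnit ((μ^2 • 1 : H2 →L[ℂ] H2) * T) := by
    rw [← hkey]
    exact hAu.mul (hAu.mul (hBu.mul hBu))
  have hcu : IsUnit (μ^2 • 1 : H2 →L[ℂ] H2) := isUnit_scalar _ (pow_ne_zero 2 hμ0)
  obtain ⟨u, hu⟩ := hcu
  have : T = ↑u⁻¹ * ((μ^2 • 1 : H2 →L[ℂ] H2) * T) := by
    rw [← hu, ← mul_assoc, Units.inv_mul, one_mul]
  rw [this]
  exact u⁻¹.isUnit.mul hprod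


lemma exists_mu_aux (z μ₁ μ₂ : ℂ) (hp : μ₁ * μ₂ = 1) (hs : μ₁ + μ₂ = z)
    (hle : ‖μ₁‖ ≤ ‖μ₂‖) (hz : z ∉ I22) :
    μ₁ ≠ 0 ∧ ‖μ₁‖ < 1 ∧ z = μ₁ + μ₁⁻¹ := by
  have h1 : μ₁ ≠ 0 := by
    intro h; rw [h, zero_mul] at hp; exact one_ne_zero hp.symm
  have habs : ‖μ₁‖ * ‖μ₂‖ = 1 := by
    rw [← norm_mul, hp, norm_one]
  have hle1 : ‖μ₁‖ ≤ 1 := by nlinarith [norm_nonneg μ₁, norm_nonneg μ₂]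
  have hinv : μ₂ = μ₁⁻¹ := eq_inv_of_mul_eq_one_left (by rw [mul_comm]; exact hp)
  refine ⟨h1, lt_of_le_of_ne hle1 ?_, by rw [← hs, hinv]⟩
  intro habs1
  apply hz
  have habs2 : ‖μ₂‖ = 1 := by nlinarith
  have hsq : Complex.normSq μ₁ = 1 := by
    rw [← Complex.sq_norm, habs1]; norm_num
  have hconj : μ₂ = (starRingEnd ℂ) μ₁ := by
    rw [hinv, Complex.inv_def, hsq]
    simp
  have : z = ((2 * μ₁.re : ℝ) : ℂ) := by
    rw [← hs, hconj, Complex.add_conj]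
  refine ⟨2 * μ₁.re, ⟨?_, ?_⟩, this.symm⟩
  · have := Complex.abs_re_le_norm μ₁; rw [habs1] at this
    have := abs_le.mp this
    linarith [this.1]
  · have := Complex.abs_re_le_norm μ₁; rw [habs1] at this
    have := abs_le.mp this
    linarith [this.2]

lemma exists_mu (z : ℂ) (hz : z ∉ I22) :
    ∃ μ : ℂ, μ ≠ 0 ∧ ‖μ‖ < 1 ∧ z = μ + μ⁻¹ := by
  obtain ⟨s, hs⟩ := IsAlgClosed.exists_pow_nat_eq (z^2 - 4) (n := 2) (by norm_num)
  set μ₁ := (z + s) / 2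
  set μ₂ := (z - s) / 2
  have hp : μ₁ * μ₂ = 1 := by
    field_simp [μ₁, μ₂]
    linear_combination (-1/4 : ℂ) * hs
  have hsum : μ₁ + μ₂ = z := by show (z + s) / 2 + (z - s) / 2 = z; ring
  rcases le_total (‖μ₁‖) (‖μ₂‖) with h | h
  · obtain ⟨a, b, c⟩ := exists_mu_aux z μ₁ μ₂ hp hsum h hz
    exact ⟨μ₁, a, b, c⟩
  · obtain ⟨a, b, c⟩ := exists_mu_aux z μ₂ μ₁ (by rw [mul_comm]; exact hp)
      (by rw [add_comm]; exact hsum) h hz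
    exact ⟨μ₂, a, b, c⟩

lemma exists_mu_mem (z : ℂ) (hz : z ∈ I22) :
    ∃ μ : ℂ, μ ≠ 0 ∧ ‖μ‖ = 1 ∧ z = μ + μ⁻¹ := by
  obtain ⟨x, hx, rfl⟩ := hz
  have hnn : (0:ℝ) ≤ 4 - x^2 := by
    obtain ⟨h1, h2⟩ := hx
    nlinarith
  set s : ℝ := Real.sqrt (4 - x^2) with hsdef
  have hs2 : s^2 = 4 - x^2 := Real.sq_sqrt hnn
  set μ : ℂ := (x + s * Complex.I) / 2 with hμdef
  have hcs : (μ.re) = x / 2 ∧ (μ.im) = s / 2 := by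
    constructor <;> simp [hμdef, Complex.div_re, Complex.div_im]
  have hsq : Complex.normSq μ = 1 := by
    rw [Complex.normSq_apply, hcs.1, hcs.2]
    field_simp
    nlinarith [hs2]
  have h0 : μ ≠ 0 := by
    intro h
    rw [h, map_zero] at hsq
    norm_num at hsq
  have habs : ‖μ‖ = 1 := by
    rw [Complex.norm_def, hsq, Real.sqrt_one]
  refine ⟨μ, h0, habs, ?_⟩
  have key : μ^2 + 1 = (x : ℂ) * μ := by
    rw [hμdef]
    have h4 : ((s:ℂ))^2 = 4 - (x:ℂ)^2 := by
      rw [← Complex.ofReal_pow, hs2]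
      push_cast
      ring
    linear_combination ((s:ℂ)^2/4) * Complex.I_sq - (1/4:ℂ) * h4
  have : μ + μ⁻¹ = ((x:ℂ) * μ) / μ := by
    rw [← key]; field_simp
  rw [this, mul_div_assoc, div_self h0, mul_one]

lemma bhat_zero (z : ℂ) : bhat z 0 = 2 + z^2 := by simp [bhat]
lemma bhat_vanish (z : ℂ) {n : ℤ} (hn : 3 ≤ n.natAbs) : bhat z n = 0 := by
  have h0 : n ≠ 0 := by omega
  have h1 : n.natAbs ≠ 1 := by omega
  have h2 : n.natAbs ≠ 2 := by omega
  simp [bhat, h0, h1, h2]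

lemma bhat_bound (z : ℂ) (n : ℤ) :
    ‖bhat z n‖ ≤ ‖2 + z^2‖ + ‖2*z‖ + 1 := by
  have p1 : (0:ℝ) ≤ ‖2 + z^2‖ := norm_nonneg _
  have p2 : (0:ℝ) ≤ ‖2*z‖ := norm_nonneg _
  rw [bhat]
  split_ifs with h1 h2 h3
  · linarith
  · rw [show (-2 : ℂ) * z = -(2*z) by ring, norm_neg]
    linarith
  · rw [norm_one]; linarith
  · rw [norm_zero]; positivity

lemma sum_sq_lower (N : ℕ) : (N:ℝ)^3 / 3 ≤ ∑ k ∈ Finset.range N, ((k:ℝ)+1)^2 := by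
  induction N with
  | zero => norm_num
  | succ n ih =>
    rw [Finset.sum_range_succ]
    push_cast
    nlinarith [ih, Nat.cast_nonneg (α := ℝ) n]

section dir2
variable (z μ : ℂ) (T : H2 →L[ℂ] H2) (Nn : ℕ)

/-- truncated approximate kernel vector -/
noncomputable def xN : H2 := ∑ l ∈ Finset.range Nn, (((l:ℂ)+1) * μ^l) • e l

lemma xN_coord (k : ℕ) :
    ((xN μ Nn : H2) : ℕ → ℂ) k = if k ∈ Finset.range Nn then ((k:ℂ)+1) * μ^k else 0 := by
  rw [xN, lp.coeFn_sum, Finset.sum_apply]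
  have : ∀ l ∈ Finset.range Nn,
      ((((l:ℂ)+1) * μ^l) • e l : H2) k = if k = l then ((l:ℂ)+1) * μ^l else 0 := by
    intro l _
    rw [lp.coeFn_smul, Pi.smul_apply, e_apply, smul_eq_mul]
    split_ifs <;> simp
  rw [Finset.sum_congr rfl this]
  rw [Finset.sum_ite_eq (Finset.range Nn) k (fun l => ((l:ℂ)+1) * μ^l)]

lemma TxN_coord (hTc : ∀ j l : ℕ, (T (e l) : ℕ → ℂ) j = bhat z ((j:ℤ) - (l:ℤ))) (k : ℕ) :
    ((T (xN μ Nn) : H2) : ℕ → ℂ) k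
      = ∑ l ∈ Finset.range Nn, (((l:ℂ)+1) * μ^l) * bhat z ((k:ℤ) - (l:ℤ)) := by
  rw [xN, map_sum, lp.coeFn_sum, Finset.sum_apply]
  apply Finset.sum_congr rfl
  intro l _
  rw [map_smul, lp.coeFn_smul, Pi.smul_apply, hTc k l, smul_eq_mul]

end dir2

lemma TxN_vanish (z μ : ℂ) (hμ0 : μ ≠ 0) (hz : z = μ + μ⁻¹) (T : H2 →L[ℂ] H2) (Nn : ℕ)
    (hTc : ∀ j l : ℕ, (T (e l) : ℕ → ℂ) j = bhat z ((j:ℤ) - (l:ℤ)))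
    (k : ℕ) (hk : k ∉ insert 0 (insert 1 (Finset.Icc (Nn-2) (Nn+1)))) :
    ((T (xN μ Nn) : H2) : ℕ → ℂ) k = 0 := by
  rw [TxN_coord z μ T Nn hTc k]
  simp only [Finset.mem_insert, Finset.mem_Icc, not_or, not_and_or, not_le] at hk
  obtain ⟨hk0, hk1, hk2⟩ := hk
  rcases hk2 with h | h
  · -- k < Nn - 2, so k + 2 < Nn, and k ≥ 2
    have hk2' : k + 2 < Nn := by omega
    have hkge : 2 ≤ k := by omega
    obtain ⟨m, rfl⟩ : ∃ m, k = m + 2 := ⟨k - 2, by omega⟩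
    have hsub : Finset.Icc m (m+4) ⊆ Finset.range Nn := by
      intro a ha
      simp only [Finset.mem_Icc] at ha
      simp only [Finset.mem_range]
      omega
    rw [← Finset.sum_subset hsub]
    · have hIcc : Finset.Icc m (m+4)
          = insert m (insert (m+1) (insert (m+2) (insert (m+3) {m+4}))) := by
        ext a
        simp only [Finset.mem_Icc, Finset.mem_insert, Finset.mem_singleton]
        omega
      rw [hIcc]
      rw [Finset.sum_insert (by simp; try omega), Finset.sum_insert (by simp; try omega),
        Finset.sum_insert (by simp; try omega), Finset.sum_insert (by simp; try omega),
        Finset.sum_singleton]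
      have e0 : ((m:ℤ)+2) - (m:ℤ) = 2 := by ring
      have e1 : ((m:ℤ)+2) - ((m:ℤ)+1) = 1 := by ring
      have e2 : ((m:ℤ)+2) - ((m:ℤ)+2) = 0 := by ring
      have e3 : ((m:ℤ)+2) - ((m:ℤ)+3) = -1 := by ring
      have e4 : ((m:ℤ)+2) - ((m:ℤ)+4) = -2 := by ring
      push_cast
      rw [e0, e1, e2, e3, e4]
      have b0 : bhat z 2 = 1 := by simp [bhat]
      have b1 : bhat z 1 = -2*z := by simp [bhat]
      have b2 : bhat z 0 = 2 + z^2 := by simp [bhat]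
      have b3 : bhat z (-1) = -2*z := by simp [bhat]
      have b4 : bhat z (-2) = 1 := by simp [bhat]
      rw [b0, b1, b2, b3, b4, hz]
      field_simp
      ring
    · intro l hl hnot
      have : 3 ≤ (((m:ℤ)+2) - (l:ℤ)).natAbs := by
        simp only [Finset.mem_Icc, not_and_or, not_le] at hnot
        simp only [Finset.mem_range] at hl
        omega
      push_cast
      rw [bhat_vanish z this, mul_zero]
  · -- k > Nn + 1
    apply Finset.sum_eq_zero
    intro l hl
    simp only [Finset.mem_range] at hl
    have : 3 ≤ (((k:ℤ)) - (l:ℤ)).natAbs := by omega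
    rw [bhat_vanish z this, mul_zero]

lemma TxN_rowbound (z μ : ℂ) (hμ : ‖μ‖ = 1) (T : H2 →L[ℂ] H2) (Nn : ℕ)
    (hTc : ∀ j l : ℕ, (T (e l) : ℕ → ℂ) j = bhat z ((j:ℤ) - (l:ℤ))) (k : ℕ) :
    ‖((T (xN μ Nn) : H2) : ℕ → ℂ) k‖
      ≤ 5 * Nn * (‖2 + z^2‖ + ‖2*z‖ + 1) := by
  set Bz := ‖2 + z^2‖ + ‖2*z‖ + 1 with hBz
  have hBznn : (0:ℝ) ≤ Bz := by
    rw [hBz]; positivity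
  rw [TxN_coord z μ T Nn hTc k]
  set f : ℕ → ℂ := fun l => (((l:ℂ)+1) * μ^l) * bhat z ((k:ℤ) - (l:ℤ)) with hf
  have hsub : Finset.range Nn ∩ Finset.Icc (k-2) (k+2) ⊆ Finset.range Nn :=
    Finset.inter_subset_left
  have hvan : ∀ l ∈ Finset.range Nn, l ∉ Finset.range Nn ∩ Finset.Icc (k-2) (k+2) → f l = 0 := by
    intro l hl hnot
    have hni : l ∉ Finset.Icc (k-2) (k+2) := fun hIn => hnot (Finset.mem_inter.mpr ⟨hl, hIn⟩)
    rw [Finset.mem_Icc, not_and_or, not_le, not_le] at hni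
    have : 3 ≤ ((k:ℤ) - (l:ℤ)).natAbs := by omega
    show (((l:ℂ)+1) * μ^l) * bhat z ((k:ℤ) - (l:ℤ)) = 0
    rw [bhat_vanish z this, mul_zero]
  rw [← Finset.sum_subset hsub hvan]
  calc ‖∑ l ∈ Finset.range Nn ∩ Finset.Icc (k-2) (k+2), f l‖
      ≤ ∑ l ∈ Finset.range Nn ∩ Finset.Icc (k-2) (k+2), ‖f l‖ :=
        norm_sum_le _ _
    _ ≤ ∑ _l ∈ Finset.range Nn ∩ Finset.Icc (k-2) (k+2), ((Nn:ℝ) * Bz) := by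
        apply Finset.sum_le_sum
        intro l hl
        simp only [Finset.mem_inter, Finset.mem_range] at hl
        show ‖(((l:ℂ)+1) * μ^l) * bhat z ((k:ℤ) - (l:ℤ))‖ ≤ (Nn:ℝ) * Bz
        rw [norm_mul, norm_mul, norm_pow, hμ, one_pow, mul_one]
        have h1 : ‖(l:ℂ)+1‖ = (l:ℝ) + 1 := by
          rw [show ((l:ℂ)+1) = ((l+1 : ℕ) : ℂ) by push_cast; ring, Complex.norm_natCast]
          push_cast; ring
        rw [h1]
        have h2 : (l:ℝ) + 1 ≤ (Nn:ℝ) := by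
          have h := hl.1
          have : (l:ℝ) < (Nn:ℝ) := by exact_mod_cast h
          have hi : ((l:ℝ)+1) ≤ (Nn:ℝ) := by
            have : l + 1 ≤ Nn := hl.1
            exact_mod_cast this
          linarith
        have h3 := bhat_bound z ((k:ℤ) - (l:ℤ))
        rw [← hBz] at h3
        have h4 : (0:ℝ) ≤ ‖bhat z ((k:ℤ) - (l:ℤ))‖ := norm_nonneg _
        nlinarith [Nat.cast_nonneg (α := ℝ) l]
    _ ≤ 5 * Nn * Bz := by
        rw [Finset.sum_const, nsmul_eq_mul]
        have hcard : (Finset.range Nn ∩ Finset.Icc (k-2) (k+2)).card ≤ 5 := by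
          calc (Finset.range Nn ∩ Finset.Icc (k-2) (k+2)).card
              ≤ (Finset.Icc (k-2) (k+2)).card := Finset.card_le_card Finset.inter_subset_right
            _ = (k+2) + 1 - (k-2) := Nat.card_Icc _ _
            _ ≤ 5 := by omega
        have : ((Finset.range Nn ∩ Finset.Icc (k-2) (k+2)).card : ℝ) ≤ 5 := by
          exact_mod_cast hcard
        calc ((Finset.range Nn ∩ Finset.Icc (k-2) (k+2)).card : ℝ) * ((Nn:ℝ) * Bz)
            ≤ 5 * ((Nn:ℝ) * Bz) := by
              apply mul_le_mul_of_nonneg_right this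
              exact mul_nonneg (Nat.cast_nonneg _) hBznn
          _ = 5 * Nn * Bz := by ring

lemma xN_normsq (μ : ℂ) (hμ : ‖μ‖ = 1) (Nn : ℕ) :
    ‖(xN μ Nn : H2)‖^2 = ∑ k ∈ Finset.range Nn, ((k:ℝ)+1)^2 := by
  have h1 := lp.norm_rpow_eq_tsum (p := 2) (by norm_num) (xN μ Nn : H2)
  have hcoord : ∀ k, ‖((xN μ Nn : H2) : ℕ → ℂ) k‖ ^ ((2:ENNReal)).toReal
      = if k ∈ Finset.range Nn then ((k:ℝ)+1)^2 else 0 := by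
    intro k
    rw [xN_coord]
    split_ifs with h
    · rw [rpow_two_norm _ (norm_nonneg _)]
      have : ‖((k:ℂ)+1) * μ^k‖ = (k:ℝ)+1 := by
        rw [norm_mul, norm_pow]
        have hm : ‖μ‖ = 1 := hμ
        rw [hm, one_pow, mul_one]
        rw [show ((k:ℂ)+1) = ((k+1 : ℕ) : ℂ) by push_cast; ring]
        rw [Complex.norm_natCast]
        push_cast; ring
      rw [this]
    · simp [rpow_two_norm _ (norm_nonneg _)]
  have h2 : ∑' k, ‖((xN μ Nn : H2) : ℕ → ℂ) k‖ ^ ((2:ENNReal)).toReal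
      = ∑ k ∈ Finset.range Nn, ((k:ℝ)+1)^2 := by
    rw [tsum_congr hcoord, tsum_eq_sum (s := Finset.range Nn) (by intro k hk; simp [hk])]
    apply Finset.sum_congr rfl
    intro k hk
    simp [hk]
  rw [← rpow_two_norm _ (norm_nonneg _), h1, h2]

lemma TxN_repr (z μ : ℂ) (hμ0 : μ ≠ 0) (hz : z = μ + μ⁻¹) (T : H2 →L[ℂ] H2) (Nn : ℕ)
    (hTc : ∀ j l : ℕ, (T (e l) : ℕ → ℂ) j = bhat z ((j:ℤ) - (l:ℤ))) :
    T (xN μ Nn) = ∑ j ∈ insert 0 (insert 1 (Finset.Icc (Nn-2) (Nn+1))),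
      (((T (xN μ Nn) : H2) : ℕ → ℂ) j) • e j := by
  set F := insert 0 (insert 1 (Finset.Icc (Nn-2) (Nn+1))) with hF
  apply lp.ext
  funext k
  rw [lp.coeFn_sum, Finset.sum_apply]
  have : ∀ j ∈ F, ((((T (xN μ Nn) : H2) : ℕ → ℂ) j) • e j : H2) k
      = if k = j then (((T (xN μ Nn) : H2) : ℕ → ℂ) j) else 0 := by
    intro j _
    rw [lp.coeFn_smul, Pi.smul_apply, e_apply, smul_eq_mul]
    split_ifs <;> simp
  rw [Finset.sum_congr rfl this, Finset.sum_ite_eq F k]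
  split_ifs with h
  · rfl
  · exact TxN_vanish z μ hμ0 hz T Nn hTc k h

lemma TxN_norm_le (z μ : ℂ) (hμ0 : μ ≠ 0) (hμ : ‖μ‖ = 1) (hz : z = μ + μ⁻¹)
    (T : H2 →L[ℂ] H2) (Nn : ℕ)
    (hTc : ∀ j l : ℕ, (T (e l) : ℕ → ℂ) j = bhat z ((j:ℤ) - (l:ℤ))) :
    ‖T (xN μ Nn)‖ ≤ 30 * Nn * (‖2 + z^2‖ + ‖2*z‖ + 1) := by
  set Bz := ‖2 + z^2‖ + ‖2*z‖ + 1 with hBz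
  have hBznn : (0:ℝ) ≤ Bz := by rw [hBz]; positivity
  set F := insert 0 (insert 1 (Finset.Icc (Nn-2) (Nn+1))) with hF
  have hcard : (F.card : ℝ) ≤ 6 := by
    have : F.card ≤ 6 := by
      have c1 := Finset.card_insert_le 0 (insert 1 (Finset.Icc (Nn-2) (Nn+1)))
      have c2 := Finset.card_insert_le 1 (Finset.Icc (Nn-2) (Nn+1))
      have c3 : (Finset.Icc (Nn-2) (Nn+1)).card = Nn + 1 + 1 - (Nn - 2) := Nat.card_Icc _ _
      rw [hF]
      omega
    exact_mod_cast this
  rw [TxN_repr z μ hμ0 hz T Nn hTc]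
  calc ‖∑ j ∈ F, (((T (xN μ Nn) : H2) : ℕ → ℂ) j) • e j‖
      ≤ ∑ j ∈ F, ‖(((T (xN μ Nn) : H2) : ℕ → ℂ) j) • e j‖ := norm_sum_le _ _
    _ ≤ ∑ _j ∈ F, (5 * Nn * Bz) := by
        apply Finset.sum_le_sum
        intro j _
        rw [norm_smul]
        have he : ‖e j‖ = 1 := by
          have := lp.norm_single (p := 2) (E := fun _ : ℕ => ℂ) (by norm_num) j (1:ℂ)
          simpa [e] using this
        rw [he, mul_one]
        exact TxN_rowbound z μ hμ T Nn hTc j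
    _ = (F.card : ℝ) * (5 * Nn * Bz) := by rw [Finset.sum_const, nsmul_eq_mul]
    _ ≤ 6 * (5 * Nn * Bz) := by
        apply mul_le_mul_of_nonneg_right hcard
        positivity
    _ = 30 * Nn * Bz := by ring

lemma dir2 (z μ : ℂ) (hμ0 : μ ≠ 0) (hμ : ‖μ‖ = 1) (hz : z = μ + μ⁻¹)
    (T : H2 →L[ℂ] H2) (hTc : ∀ j l : ℕ, (T (e l) : ℕ → ℂ) j = bhat z ((j:ℤ) - (l:ℤ))) :
    ¬ IsUnit T := by
  intro hU
  obtain ⟨u, hu⟩ := hU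
  set Rop := (↑u⁻¹ : H2 →L[ℂ] H2) with hR
  have hRT : ∀ v : H2, Rop (T v) = v := by
    intro v
    have : (↑u⁻¹ * ↑u : H2 →L[ℂ] H2) = 1 := by rw [Units.inv_mul]
    calc Rop (T v) = ((↑u⁻¹ * ↑u : H2 →L[ℂ] H2)) v := by rw [hu]; rfl
      _ = v := by rw [this]; rfl
  set Bz := ‖2 + z^2‖ + ‖2*z‖ + 1 with hBz
  have hBznn : (0:ℝ) ≤ Bz := by rw [hBz]; positivity
  set c : ℝ := ‖Rop‖ * (30 * Bz) with hc
  have hcnn : 0 ≤ c := by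
    rw [hc]; positivity
  obtain ⟨Nn, hNn⟩ := exists_nat_gt (3 * c^2 + 1)
  -- bounds
  have hlow : (Nn:ℝ)^3 / 3 ≤ ‖(xN μ Nn : H2)‖^2 := by
    rw [xN_normsq μ hμ]
    exact sum_sq_lower Nn
  have hup : ‖(xN μ Nn : H2)‖ ≤ c * Nn := by
    calc ‖(xN μ Nn : H2)‖ = ‖Rop (T (xN μ Nn))‖ := by rw [hRT]
      _ ≤ ‖Rop‖ * ‖T (xN μ Nn)‖ := Rop.le_opNorm _
      _ ≤ ‖Rop‖ * (30 * Nn * Bz) := by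
          apply mul_le_mul_of_nonneg_left (TxN_norm_le z μ hμ0 hμ hz T Nn hTc) (norm_nonneg _)
      _ = c * Nn := by rw [hc]; ring
  have hN1 : (1:ℝ) ≤ (Nn:ℝ) := by nlinarith
  have hsq : ‖(xN μ Nn : H2)‖^2 ≤ c^2 * (Nn:ℝ)^2 := by
    have h := mul_self_le_mul_self (norm_nonneg _) hup
    calc ‖(xN μ Nn : H2)‖^2 = ‖(xN μ Nn : H2)‖ * ‖(xN μ Nn : H2)‖ := sq (‖(xN μ Nn : H2)‖) ▸ by ring
      _ ≤ (c * Nn) * (c * Nn) := h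
      _ = c^2 * (Nn:ℝ)^2 := by ring
  have : (Nn:ℝ)^3 / 3 ≤ c^2 * (Nn:ℝ)^2 := le_trans hlow hsq
  nlinarith [sq_nonneg (Nn:ℝ), hNn, hN1]


/-- the Toeplitz operator `T(β)` is invertible iff `z ∉ [−2,2]`. -/
theorem stmt_9 (z : ℂ) (T : H2 →L[ℂ] H2)
    (hT : ∀ j l : ℕ, (inner ℂ (e j) (T (e l)) : ℂ) = bhat z ((j : ℤ) - (l : ℤ))) :
    IsUnit T ↔ z ∉ I22 := by
  have hTc : ∀ j l : ℕ, (T (e l) : ℕ → ℂ) j = bhat z ((j:ℤ) - (l:ℤ)) := by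
    intro j l
    rw [← inner_e_left j (T (e l))]
    exact hT j l
  constructor
  · intro hU hmem
    obtain ⟨μ, h0, h1, h2⟩ := exists_mu_mem z hmem
    exact dir2 z μ h0 h1 h2 T hTc hU
  · intro hz
    obtain ⟨μ, h0, h1, h2⟩ := exists_mu z hz
    exact dir1 z μ h0 h1 h2 T hTc
end
end
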